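/- Let A and B be m×m Hermitian matrices with A ≥ εI and B ≥ εI for some ε > 0. Then for every m×m matrix C: ε·tr[C* ((A,B)♯̂ C)] ≤ tr[C*C] ≤ (1/ε)·tr[C* ((A,B)# C)]. -/

import Mathlib

open MeasureTheory Matrix
open scoped ComplexOrder

attribute [local instance] Matrix.frobeniusNormedAddCommGroup Matrix.frobeniusNormedSpace

variable {m : ℕ}

/-- `(A,B)#C = ∫₀¹ A^{1-s} C B^s ds`, with powers by functional calculus. -/
noncomputable def matSharp (A B C : Matrix (Fin m) (Fin m) ℂ) : Matrix (Fin m) (Fin m) ℂ :=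
  ∫ s in (0:ℝ)..1,
    cfc (fun t : ℝ => t ^ (1 - s)) A * C * cfc (fun t : ℝ => t ^ s) B

/-- `(A,B)♯̂C = ∫₀^∞ (A+xI)⁻¹ C (B+xI)⁻¹ dx`. -/
noncomputable def matSharpHat (A B C : Matrix (Fin m) (Fin m) ℂ) : Matrix (Fin m) (Fin m) ℂ :=
  ∫ x in Set.Ioi (0:ℝ), (A + (x : ℂ) • 1)⁻¹ * C * (B + (x : ℂ) • 1)⁻¹

namespace SharpAux

noncomputable def traceForm (C : Matrix (Fin m) (Fin m) ℂ) :
    Matrix (Fin m) (Fin m) ℂ →L[ℝ] ℝ :=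
  LinearMap.toContinuousLinearMap
    (Complex.reLm.comp
      (((Matrix.traceLinearMap (Fin m) ℂ ℂ).comp (LinearMap.mulLeft ℂ Cᴴ)).restrictScalars ℝ))

lemma traceForm_apply (C M : Matrix (Fin m) (Fin m) ℂ) :
    traceForm C M = (Cᴴ * M).trace.re := rfl

lemma trace_re_nonneg_of_posSemidef {M : Matrix (Fin m) (Fin m) ℂ} (hM : M.PosSemidef) :
    0 ≤ M.trace.re := by
  have h : ∀ i, 0 ≤ (M i i).re := fun i => by
    have := hM.re_dotProduct_nonneg (Pi.single i 1)
    simpa [dotProduct, Matrix.mulVec_single, Pi.single_apply, Finset.sum_ite_eq'] using this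
  rw [Matrix.trace, Complex.re_sum]
  exact Finset.sum_nonneg fun i _ => h i

lemma trace_re_nonneg_conj {X Y : Matrix (Fin m) (Fin m) ℂ} (hX : X.PosSemidef)
    (hY : Y.PosSemidef) (C : Matrix (Fin m) (Fin m) ℂ) :
    0 ≤ (Cᴴ * (X * C * Y)).trace.re := by
  obtain ⟨S, hSh, hS⟩ : ∃ S : Matrix (Fin m) (Fin m) ℂ, S.IsHermitian ∧ S * S = Y :=
    by
    refine ⟨cfc Real.sqrt Y, cfc_predicate _ _, ?_⟩
    have hspec : ∀ x ∈ spectrum ℝ Y, 0 ≤ x := by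
      intro x hx
      rw [hY.1.spectrum_real_eq_range_eigenvalues] at hx
      obtain ⟨i, rfl⟩ := hx
      exact hY.eigenvalues_nonneg i
    rw [← cfc_mul Real.sqrt Real.sqrt Y]
    conv_rhs => rw [← cfc_id' ℝ Y hY.1]
    exact cfc_congr fun x hx => Real.mul_self_sqrt (hspec x hx)
  have key : (Cᴴ * (X * C * Y)).trace = ((C * S)ᴴ * X * (C * S)).trace := by
    rw [← hS]
    rw [show Cᴴ * (X * C * (S * S)) = (Cᴴ * X * C * S) * S by noncomm_ring]
    rw [Matrix.trace_mul_comm]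
    congr 1
    rw [Matrix.conjTranspose_mul, hSh.eq]
    noncomm_ring
  rw [key]
  exact trace_re_nonneg_of_posSemidef (hX.conjTranspose_mul_mul_same (C * S))

lemma expand2 (P Q R S C : Matrix (Fin m) (Fin m) ℂ) :
    (P + Q) * C * (R + S) = P * C * R + P * C * S + Q * C * R + Q * C * S := by
  noncomm_ring

lemma re_trace_smul (r : ℝ) (M : Matrix (Fin m) (Fin m) ℂ) :
    (((r : ℂ) • M).trace).re = r * M.trace.re := by
  rw [Matrix.trace_smul, smul_eq_mul, Complex.re_ofReal_mul]

lemma smul_term_left (r : ℝ) (M C N : Matrix (Fin m) (Fin m) ℂ) :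
    Cᴴ * (((r:ℂ) • M) * C * N) = (r:ℂ) • (Cᴴ * (M * C * N)) := by
  simp [Matrix.smul_mul, Matrix.mul_smul]

lemma smul_term_right (r : ℝ) (M C N : Matrix (Fin m) (Fin m) ℂ) :
    Cᴴ * (M * C * ((r:ℂ) • N)) = (r:ℂ) • (Cᴴ * (M * C * N)) := by
  simp [Matrix.smul_mul, Matrix.mul_smul]

lemma trace_re_ge {X Y : Matrix (Fin m) (Fin m) ℂ} {x y : ℝ} (hx : 0 ≤ x) (hy : 0 ≤ y)
    (hX : (X - (x:ℂ) • 1).PosSemidef) (hY : (Y - (y:ℂ) • 1).PosSemidef)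
    (C : Matrix (Fin m) (Fin m) ℂ) :
    x * y * (Cᴴ * C).trace.re ≤ (Cᴴ * (X * C * Y)).trace.re := by
  have hX1 : X = (X - (x:ℂ) • 1) + (x:ℂ) • 1 := by abel
  have hY1 : Y = (Y - (y:ℂ) • 1) + (y:ℂ) • 1 := by abel
  set X' := X - (x:ℂ) • 1 with hX'
  set Y' := Y - (y:ℂ) • 1 with hY'
  have key : (Cᴴ * (X * C * Y)).trace.re
      = (Cᴴ * (X' * C * Y')).trace.re + y * (Cᴴ * (X' * C * 1)).trace.re
        + x * (Cᴴ * (1 * C * Y')).trace.re + x * (y * (Cᴴ * (1 * C * 1)).trace.re) := by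
    rw [hX1, hY1, expand2]
    simp only [Matrix.smul_mul, Matrix.mul_smul, Matrix.mul_add, Matrix.trace_add,
      Complex.add_re, smul_smul, Matrix.trace_smul, smul_eq_mul, ← Complex.ofReal_mul,
      Complex.re_ofReal_mul]
    ring
  rw [key]
  have h1 : 0 ≤ (Cᴴ * (X' * C * Y')).trace.re := trace_re_nonneg_conj hX hY C
  have h2 : 0 ≤ (Cᴴ * (X' * C * 1)).trace.re := trace_re_nonneg_conj hX Matrix.PosSemidef.one C
  have h3 : 0 ≤ (Cᴴ * (1 * C * Y')).trace.re := trace_re_nonneg_conj Matrix.PosSemidef.one hY C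
  have h4 : (Cᴴ * (1 * C * 1)).trace.re = (Cᴴ * C).trace.re := by rw [one_mul, mul_one]
  rw [h4]
  nlinarith [mul_nonneg hy h2, mul_nonneg hx h3]

lemma trace_re_le {X Y : Matrix (Fin m) (Fin m) ℂ} {x y : ℝ}
    (hX0 : X.PosSemidef) (hY0 : Y.PosSemidef)
    (hX : ((x:ℂ) • 1 - X).PosSemidef) (hY : ((y:ℂ) • 1 - Y).PosSemidef)
    (C : Matrix (Fin m) (Fin m) ℂ) :
    (Cᴴ * (X * C * Y)).trace.re ≤ x * y * (Cᴴ * C).trace.re := by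
  have hx1 : (x:ℂ) • (1 : Matrix (Fin m) (Fin m) ℂ) = X + ((x:ℂ) • 1 - X) := by abel
  have hy1 : (y:ℂ) • (1 : Matrix (Fin m) (Fin m) ℂ) = Y + ((y:ℂ) • 1 - Y) := by abel
  have key : x * y * (Cᴴ * C).trace.re
      = (Cᴴ * (((x:ℂ) • 1) * C * ((y:ℂ) • 1))).trace.re := by
    simp only [Matrix.smul_mul, Matrix.mul_smul, smul_smul, Matrix.trace_smul,
      smul_eq_mul, ← Complex.ofReal_mul, Complex.re_ofReal_mul, one_mul, mul_one]
    ring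
  rw [key, hx1, hy1, expand2]
  simp only [Matrix.mul_add, Matrix.trace_add, Complex.add_re]
  have h2 : 0 ≤ (Cᴴ * (X * C * ((y:ℂ) • 1 - Y))).trace.re := trace_re_nonneg_conj hX0 hY C
  have h3 : 0 ≤ (Cᴴ * (((x:ℂ) • 1 - X) * C * Y)).trace.re := trace_re_nonneg_conj hX hY0 C
  have h4 : 0 ≤ (Cᴴ * (((x:ℂ) • 1 - X) * C * ((y:ℂ) • 1 - Y))).trace.re :=
    trace_re_nonneg_conj hX hY C
  linarith

section CFC

variable {A : Matrix (Fin m) (Fin m) ℂ}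

/-- conjugation of a real diagonal by the eigenvector unitary of `A`. -/
noncomputable def conjD (hA : A.IsHermitian) (d : Fin m → ℝ) : Matrix (Fin m) (Fin m) ℂ :=
  (hA.eigenvectorUnitary : Matrix (Fin m) (Fin m) ℂ) * diagonal (fun i => (d i : ℂ)) *
    star (hA.eigenvectorUnitary : Matrix (Fin m) (Fin m) ℂ)

lemma uMul (hA : A.IsHermitian) :
    (hA.eigenvectorUnitary : Matrix (Fin m) (Fin m) ℂ) *
      star (hA.eigenvectorUnitary : Matrix (Fin m) (Fin m) ℂ) = 1 :=
  Matrix.mem_unitaryGroup_iff.mp hA.eigenvectorUnitary.2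

lemma uMul' (hA : A.IsHermitian) :
    star (hA.eigenvectorUnitary : Matrix (Fin m) (Fin m) ℂ) *
      (hA.eigenvectorUnitary : Matrix (Fin m) (Fin m) ℂ) = 1 :=
  Matrix.mem_unitaryGroup_iff'.mp hA.eigenvectorUnitary.2

lemma cfc_eq_conjD (hA : A.IsHermitian) (f : ℝ → ℝ) :
    cfc f A = conjD hA (fun i => f (hA.eigenvalues i)) := by
  rw [hA.cfc_eq, Matrix.IsHermitian.cfc]
  rfl

lemma conjD_congr (hA : A.IsHermitian) {d e : Fin m → ℝ} (h : ∀ i, d i = e i) :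
    conjD hA d = conjD hA e := by
  unfold conjD
  congr 1
  congr 1
  exact congrArg _ (funext fun i => by rw [h i])

lemma conjD_sub (hA : A.IsHermitian) (d e : Fin m → ℝ) :
    conjD hA d - conjD hA e = conjD hA (fun i => d i - e i) := by
  unfold conjD
  rw [← Matrix.sub_mul, ← Matrix.mul_sub, Matrix.diagonal_sub]
  congr 2
  push_cast
  rfl

lemma conjD_add (hA : A.IsHermitian) (d e : Fin m → ℝ) :
    conjD hA d + conjD hA e = conjD hA (fun i => d i + e i) := by
  unfold conjD
  rw [← Matrix.add_mul, ← Matrix.mul_add, Matrix.diagonal_add]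
  congr 2
  push_cast
  rfl

lemma conjD_const (hA : A.IsHermitian) (c : ℝ) :
    conjD hA (fun _ => c) = (c : ℂ) • 1 := by
  unfold conjD
  rw [← Matrix.smul_one_eq_diagonal, Matrix.mul_smul, Matrix.smul_mul, Matrix.mul_one, uMul hA]

lemma conjD_mul (hA : A.IsHermitian) (d e : Fin m → ℝ) :
    conjD hA d * conjD hA e = conjD hA (fun i => d i * e i) := by
  unfold conjD
  have : (hA.eigenvectorUnitary : Matrix (Fin m) (Fin m) ℂ) * diagonal (fun i => (d i : ℂ)) *
      star (hA.eigenvectorUnitary : Matrix (Fin m) (Fin m) ℂ) *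
      ((hA.eigenvectorUnitary : Matrix (Fin m) (Fin m) ℂ) * diagonal (fun i => (e i : ℂ)) *
      star (hA.eigenvectorUnitary : Matrix (Fin m) (Fin m) ℂ))
      = (hA.eigenvectorUnitary : Matrix (Fin m) (Fin m) ℂ) * (diagonal (fun i => (d i : ℂ)) *
        (star (hA.eigenvectorUnitary : Matrix (Fin m) (Fin m) ℂ) *
        (hA.eigenvectorUnitary : Matrix (Fin m) (Fin m) ℂ)) * diagonal (fun i => (e i : ℂ))) *
        star (hA.eigenvectorUnitary : Matrix (Fin m) (Fin m) ℂ) := by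
    noncomm_ring
  rw [this, uMul' hA, Matrix.mul_one, Matrix.diagonal_mul_diagonal]
  congr 2
  push_cast
  rfl

lemma conjD_posSemidef (hA : A.IsHermitian) {d : Fin m → ℝ} (hd : ∀ i, 0 ≤ d i) :
    (conjD hA d).PosSemidef := by
  have hdiag : (diagonal (fun i => (d i : ℂ))).PosSemidef :=
    Matrix.PosSemidef.diagonal fun i => by
      simpa using Complex.zero_le_real.mpr (hd i)
  have := hdiag.mul_mul_conjTranspose_same
    (hA.eigenvectorUnitary : Matrix (Fin m) (Fin m) ℂ)
  rwa [← Matrix.star_eq_conjTranspose] at this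

lemma A_eq_conjD (hA : A.IsHermitian) : A = conjD hA hA.eigenvalues := by
  conv_lhs => rw [hA.spectral_theorem]
  rfl

lemma eig_ge {ε : ℝ} (hA : A.IsHermitian) (hAε : (A - (ε : ℂ) • 1).PosSemidef) (i : Fin m) :
    ε ≤ hA.eigenvalues i := by
  set v : Fin m → ℂ := ⇑(hA.eigenvectorBasis i) with hv
  have h := hAε.re_dotProduct_nonneg v
  have hvv : dotProduct (star v) v = 1 := by
    have h1 : (inner ℂ (hA.eigenvectorBasis i) (hA.eigenvectorBasis i) : ℂ) =
        dotProduct (star v) v := by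
      rw [EuclideanSpace.inner_eq_star_dotProduct, dotProduct_comm]
    rw [← h1, inner_self_eq_norm_sq_to_K, hA.eigenvectorBasis.orthonormal.1 i]
    norm_num
  have hsub : (A - (ε : ℂ) • 1) *ᵥ v = A *ᵥ v - (ε : ℂ) • v := by
    rw [Matrix.sub_mulVec, Matrix.smul_mulVec, Matrix.one_mulVec]
  rw [hsub, dotProduct_sub, dotProduct_smul, hvv, smul_eq_mul, mul_one,
    map_sub] at h
  have he := hA.eigenvalues_eq i
  rw [← hv] at he
  rw [← he] at h
  simpa using h

lemma add_smul_eq (hA : A.IsHermitian) (x : ℝ) :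
    A + (x : ℂ) • 1 = conjD hA (fun i => hA.eigenvalues i + x) := by
  conv_lhs => rw [A_eq_conjD hA]
  rw [← conjD_const hA x, conjD_add]

lemma inv_add_eq (hA : A.IsHermitian) {x : ℝ} (hpos : ∀ i, 0 < hA.eigenvalues i + x) :
    (A + (x : ℂ) • 1)⁻¹ = conjD hA (fun i => (hA.eigenvalues i + x)⁻¹) := by
  apply Matrix.inv_eq_right_inv
  rw [add_smul_eq hA x, conjD_mul,
    conjD_congr hA (fun i => mul_inv_cancel₀ (hpos i).ne'),
    conjD_const hA 1, Complex.ofReal_one, one_smul]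

lemma conjD_sub_const_psd (hA : A.IsHermitian) {d : Fin m → ℝ} {c : ℝ}
    (h : ∀ i, c ≤ d i) : (conjD hA d - (c : ℂ) • 1).PosSemidef := by
  rw [← conjD_const hA c, conjD_sub]
  exact conjD_posSemidef hA fun i => sub_nonneg.mpr (h i)

lemma const_sub_conjD_psd (hA : A.IsHermitian) {d : Fin m → ℝ} {c : ℝ}
    (h : ∀ i, d i ≤ c) : ((c : ℂ) • 1 - conjD hA d).PosSemidef := by
  rw [← conjD_const hA c, conjD_sub]
  exact conjD_posSemidef hA fun i => sub_nonneg.mpr (h i)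

end CFC

end SharpAux

open SharpAux

/-- If `A, B` are Hermitian with `A ≥ εI`, `B ≥ εI` for some `ε > 0`, then for every `C`:
`ε·tr[C* ((A,B)♯̂ C)] ≤ tr[C*C] ≤ (1/ε)·tr[C* ((A,B)# C)]`. -/
theorem trace_sharp_eps_bounds (A B : Matrix (Fin m) (Fin m) ℂ)
    (hA : A.IsHermitian) (hB : B.IsHermitian) (ε : ℝ) (hε : 0 < ε)
    (hAε : (A - (ε : ℂ) • 1).PosSemidef) (hBε : (B - (ε : ℂ) • 1).PosSemidef)
    (C : Matrix (Fin m) (Fin m) ℂ) :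
    ε * (Cᴴ * matSharpHat A B C).trace.re ≤ (Cᴴ * C).trace.re ∧
      (Cᴴ * C).trace.re ≤ (1 / ε) * (Cᴴ * matSharp A B C).trace.re := by
  set K := (Cᴴ * C).trace.re with hKdef
  have hK : 0 ≤ K := trace_re_nonneg_of_posSemidef (Matrix.posSemidef_conjTranspose_mul_self C)
  have heigA : ∀ i, ε ≤ hA.eigenvalues i := eig_ge hA hAε
  have heigB : ∀ i, ε ≤ hB.eigenvalues i := eig_ge hB hBε
  constructor
  · -- hat part
    set g : ℝ → Matrix (Fin m) (Fin m) ℂ :=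
      fun x => (A + (x : ℂ) • 1)⁻¹ * C * (B + (x : ℂ) • 1)⁻¹ with hg
    by_cases hInt : @IntegrableOn ℝ (Matrix (Fin m) (Fin m) ℂ) _ PseudoMetricSpace.toUniformSpace.toTopologicalSpace _ g (Set.Ioi (0:ℝ)) volume
    · have hswap : (Cᴴ * matSharpHat A B C).trace.re
          = ∫ x in Set.Ioi (0:ℝ), (Cᴴ * g x).trace.re := by
        have := (traceForm C).integral_comp_comm hInt
        rw [matSharpHat]
        exact this.symm
      have hpoint : ∀ x ∈ Set.Ioi (0:ℝ),
          (Cᴴ * g x).trace.re ≤ ((ε + x) * (ε + x))⁻¹ * K := by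
        intro x hx
        have hx0 : (0:ℝ) < x := hx
        have hεx : 0 < ε + x := by linarith
        have hposA : ∀ i, 0 < hA.eigenvalues i + x := fun i => by
          have := heigA i; linarith
        have hposB : ∀ i, 0 < hB.eigenvalues i + x := fun i => by
          have := heigB i; linarith
        have hgx : g x = conjD hA (fun i => (hA.eigenvalues i + x)⁻¹) * C *
            conjD hB (fun i => (hB.eigenvalues i + x)⁻¹) := by
          show (A + (x : ℂ) • 1)⁻¹ * C * (B + (x : ℂ) • 1)⁻¹ = _
          rw [inv_add_eq hA hposA, inv_add_eq hB hposB]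
        have hXpsd : (conjD hA (fun i => (hA.eigenvalues i + x)⁻¹)).PosSemidef :=
          conjD_posSemidef hA fun i => (inv_nonneg).mpr (hposA i).le
        have hYpsd : (conjD hB (fun i => (hB.eigenvalues i + x)⁻¹)).PosSemidef :=
          conjD_posSemidef hB fun i => (inv_nonneg).mpr (hposB i).le
        have hXle : ((((ε + x)⁻¹ : ℝ) : ℂ) • 1 -
            conjD hA (fun i => (hA.eigenvalues i + x)⁻¹)).PosSemidef :=
          const_sub_conjD_psd hA fun i => by
            have := heigA i
            gcongr
        have hYle : ((((ε + x)⁻¹ : ℝ) : ℂ) • 1 -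
            conjD hB (fun i => (hB.eigenvalues i + x)⁻¹)).PosSemidef :=
          const_sub_conjD_psd hB fun i => by
            have := heigB i
            gcongr
        have := trace_re_le hXpsd hYpsd hXle hYle C
        rw [hgx]
        calc (Cᴴ * (conjD hA (fun i => (hA.eigenvalues i + x)⁻¹) * C *
              conjD hB (fun i => (hB.eigenvalues i + x)⁻¹))).trace.re
            ≤ (ε + x)⁻¹ * (ε + x)⁻¹ * K := this
          _ = ((ε + x) * (ε + x))⁻¹ * K := by rw [mul_inv]
      -- the dominating function
      have hderiv : ∀ x ∈ Set.Ioi (0:ℝ),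
          HasDerivAt (fun y : ℝ => -(ε + y)⁻¹ * K) (((ε + x) * (ε + x))⁻¹ * K) x := by
        intro x hx
        have hx0 : (0:ℝ) < x := hx
        have hεx : (ε + x) ≠ 0 := by positivity
        have h1 : HasDerivAt (fun y : ℝ => ε + y) 1 x := (hasDerivAt_id x).const_add ε
        have h2 : HasDerivAt (fun y : ℝ => (ε + y)⁻¹) (-1 / (ε + x) ^ 2) x := h1.inv hεx
        have h3 : HasDerivAt (fun y : ℝ => -(ε + y)⁻¹ * K) (-(-1 / (ε + x) ^ 2) * K) x :=
          (h2.neg).mul_const K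
        convert h3 using 1
        rw [← pow_two]
        field_simp
      have hcont0 : ContinuousWithinAt (fun y : ℝ => -(ε + y)⁻¹ * K) (Set.Ici (0:ℝ)) 0 := by
        apply ContinuousAt.continuousWithinAt
        have h1 : HasDerivAt (fun y : ℝ => ε + y) 1 0 := (hasDerivAt_id 0).const_add ε
        exact (((h1.inv (by positivity)).neg).mul_const K).continuousAt
      have hnonneg : ∀ x ∈ Set.Ioi (0:ℝ), 0 ≤ ((ε + x) * (ε + x))⁻¹ * K := by
        intro x hx
        have hx0 : (0:ℝ) < x := hx
        have h1 : (0:ℝ) < (ε + x) * (ε + x) := by positivity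
        exact mul_nonneg (inv_nonneg.mpr h1.le) hK
      have htend : Filter.Tendsto (fun y : ℝ => -(ε + y)⁻¹ * K) Filter.atTop (nhds 0) := by
        have h1 : Filter.Tendsto (fun y : ℝ => ε + y) Filter.atTop Filter.atTop :=
          Filter.tendsto_atTop_add_const_left _ ε Filter.tendsto_id
        have h3 := ((tendsto_inv_atTop_zero.comp h1).neg).mul_const K
        simpa using h3
      have hint2 : IntegrableOn (fun x => ((ε + x) * (ε + x))⁻¹ * K) (Set.Ioi (0:ℝ)) :=
        integrableOn_Ioi_deriv_of_nonneg hcont0 hderiv hnonneg htend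
      have hval : ∫ x in Set.Ioi (0:ℝ), ((ε + x) * (ε + x))⁻¹ * K = ε⁻¹ * K := by
        rw [integral_Ioi_of_hasDerivAt_of_nonneg hcont0 hderiv hnonneg htend]
        rw [add_zero]
        ring
      have hφint : IntegrableOn (fun x => (Cᴴ * g x).trace.re) (Set.Ioi (0:ℝ)) := by
        have := (traceForm C).integrable_comp hInt
        exact this
      have hmono := setIntegral_mono_on hφint hint2 measurableSet_Ioi hpoint
      rw [hswap]
      calc ε * ∫ x in Set.Ioi (0:ℝ), (Cᴴ * g x).trace.re
          ≤ ε * (ε⁻¹ * K) := by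
            apply mul_le_mul_of_nonneg_left _ hε.le
            rw [← hval]
            exact hmono
        _ = K := by field_simp
    · have h0 : matSharpHat A B C = 0 := by
        rw [matSharpHat]
        exact integral_undef hInt
      rw [h0, Matrix.mul_zero, Matrix.trace_zero]
      simpa using hK
  · -- sharp part
    have hcA : Continuous fun s : ℝ => conjD hA (fun i => hA.eigenvalues i ^ (1 - s)) := by
      unfold conjD
      refine (Continuous.matrix_mul (Continuous.matrix_mul continuous_const
        (Continuous.matrix_diagonal ?_)) continuous_const)
      refine continuous_pi fun i => Complex.continuous_ofReal.comp ?_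
      have hb : (0:ℝ) < hA.eigenvalues i := lt_of_lt_of_le hε (heigA i)
      have heq : (fun s : ℝ => hA.eigenvalues i ^ (1 - s)) =
          fun s => Real.exp (Real.log (hA.eigenvalues i) * (1 - s)) := by
        funext s
        rw [Real.rpow_def_of_pos hb]
      rw [heq]
      exact Real.continuous_exp.comp (continuous_const.mul (by continuity))
    have hcB : Continuous fun s : ℝ => conjD hB (fun i => hB.eigenvalues i ^ s) := by
      unfold conjD
      refine (Continuous.matrix_mul (Continuous.matrix_mul continuous_const
        (Continuous.matrix_diagonal ?_)) continuous_const)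
      refine continuous_pi fun i => Complex.continuous_ofReal.comp ?_
      have hb : (0:ℝ) < hB.eigenvalues i := lt_of_lt_of_le hε (heigB i)
      have heq : (fun s : ℝ => hB.eigenvalues i ^ s) =
          fun s => Real.exp (Real.log (hB.eigenvalues i) * s) := by
        funext s
        rw [Real.rpow_def_of_pos hb]
      rw [heq]
      exact Real.continuous_exp.comp (continuous_const.mul continuous_id)
    set FA : ℝ → Matrix (Fin m) (Fin m) ℂ :=
      fun s => conjD hA (fun i => hA.eigenvalues i ^ (1 - s)) with hFA
    set FB : ℝ → Matrix (Fin m) (Fin m) ℂ :=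
      fun s => conjD hB (fun i => hB.eigenvalues i ^ s) with hFB
    have hrw : matSharp A B C = ∫ s in (0:ℝ)..1, FA s * C * FB s := by
      rw [matSharp]
      apply intervalIntegral.integral_congr
      intro s _
      simp only [cfc_eq_conjD hA, cfc_eq_conjD hB]
      rfl
    have hcont : Continuous fun s => FA s * C * FB s :=
      (hcA.matrix_mul continuous_const).matrix_mul hcB
    have hii : @IntervalIntegrable (Matrix (Fin m) (Fin m) ℂ) PseudoMetricSpace.toUniformSpace.toTopologicalSpace _ (fun s => FA s * C * FB s) volume 0 1 :=
      hcont.intervalIntegrable 0 1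
    have hswap : (Cᴴ * matSharp A B C).trace.re
        = ∫ s in (0:ℝ)..1, (Cᴴ * (FA s * C * FB s)).trace.re := by
      rw [hrw]
      have := (traceForm C).intervalIntegral_comp_comm hii
      exact this.symm
    have hpoint : ∀ s ∈ Set.Icc (0:ℝ) 1, ε * K ≤ (Cᴴ * (FA s * C * FB s)).trace.re := by
      intro s hs
      have h1s : 0 ≤ 1 - s := by linarith [hs.2]
      have hs0 : 0 ≤ s := hs.1
      have hXge : (FA s - ((ε ^ (1 - s) : ℝ) : ℂ) • 1).PosSemidef :=
        conjD_sub_const_psd hA fun i => Real.rpow_le_rpow hε.le (heigA i) h1s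
      have hYge : (FB s - ((ε ^ s : ℝ) : ℂ) • 1).PosSemidef :=
        conjD_sub_const_psd hB fun i => Real.rpow_le_rpow hε.le (heigB i) hs0
      have hmain := trace_re_ge (Real.rpow_nonneg hε.le _) (Real.rpow_nonneg hε.le _)
        hXge hYge C
      calc ε * K = ε ^ (1 - s) * ε ^ s * K := by
            rw [← Real.rpow_add hε]
            norm_num
        _ ≤ _ := hmain
    have hφint : IntervalIntegrable (fun s => (Cᴴ * (FA s * C * FB s)).trace.re) volume 0 1 := by
      have := ((traceForm C).continuous.comp hcont).intervalIntegrable (μ := volume) 0 1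
      simpa [Function.comp_def, traceForm_apply] using this
    have hmono := intervalIntegral.integral_mono_on (by norm_num : (0:ℝ) ≤ 1)
      (intervalIntegrable_const (c := ε * K)) hφint hpoint
    rw [hswap]
    have hconst : (∫ _ in (0:ℝ)..1, ε * K) = ε * K := by simp
    calc K = (1/ε) * (ε * K) := by field_simp
      _ ≤ (1/ε) * ∫ s in (0:ℝ)..1, (Cᴴ * (FA s * C * FB s)).trace.re := by
          apply mul_le_mul_of_nonneg_left _ (by positivity)
          rw [← hconst]
          exact hmono
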